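/- For r ≤ s, the map p_{s,r} sending a closed subset X of the open ball B_s to X ∩ B_r is continuous with respect to the local Hausdorff distances on B_s and B_r. In particular, if d_L^{(s)}(X_i, X) → 0 then d_L^{(r)}(X_i ∩ B_r, X ∩ B_r) → 0. -/

import Mathlib

open Metric Set Filter

/-- The local Hausdorff distance on subsets of the open ball `B_t ⊂ ℝⁿ`:
`d_L(X,Y) = d_H(X ∪ ∂B_t, Y ∪ ∂B_t)`. -/
noncomputable def localHausdorffDist {n : ℕ} (t : ℝ) (X Y : Set (EuclideanSpace ℝ (Fin n))) : ℝ :=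
  Metric.hausdorffDist (X ∪ Metric.sphere (0 : EuclideanSpace ℝ (Fin n)) t)
    (Y ∪ Metric.sphere (0 : EuclideanSpace ℝ (Fin n)) t)

/-- One-sided estimate: if `d_H(A ∪ S_s, B ∪ S_s)` is small, then every point of
`(A ∩ B_r) ∪ S_r` is close to `(B ∩ B_r) ∪ S_r`. -/
lemma trunc_infDist_le {E : Type*} [NormedAddCommGroup E] [NormedSpace ℝ E] [Nontrivial E]
    {r s : ℝ} (hr : 0 < r) (hrs : r < s) (A B : Set E)
    (hA : A ⊆ ball 0 s) (hB : B ⊆ ball 0 s)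
    (hd : hausdorffDist (A ∪ sphere 0 s) (B ∪ sphere 0 s) < min ((s - r) / 2) (r / 2)) :
    ∀ x ∈ (A ∩ ball 0 r) ∪ sphere 0 r,
      infDist x ((B ∩ ball 0 r) ∪ sphere 0 r) ≤
        hausdorffDist (A ∪ sphere 0 s) (B ∪ sphere 0 s) := by
  set d := hausdorffDist (A ∪ sphere 0 s) (B ∪ sphere 0 s) with hdef
  have hd0 : 0 ≤ d := hausdorffDist_nonneg
  have hsne : (sphere (0 : E) s).Nonempty := NormedSpace.sphere_nonempty.2 (by linarith)
  intro x hx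
  rcases hx with hx | hx
  · -- x ∈ A ∩ ball 0 r
    obtain ⟨hxA, hxb⟩ := hx
    rw [mem_ball_zero_iff] at hxb
    -- d_H(A∪S_s, B∪S_s) is finite
    have hfin : EMetric.hausdorffEdist (A ∪ sphere 0 s) (B ∪ sphere 0 s) ≠ ⊤ := by
      refine hausdorffEdist_ne_top_of_nonempty_of_bounded
        (hsne.mono subset_union_right) (hsne.mono subset_union_right) ?_ ?_ <;>
      exact (isBounded_closedBall (x := (0 : E)) (r := s)).subset
        (union_subset (by intro z hz; exact ball_subset_closedBall (by tauto))
          sphere_subset_closedBall)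
    have h1 : infDist x (B ∪ sphere 0 s) ≤ d :=
      infDist_le_hausdorffDist_of_mem (Or.inl hxA) hfin
    apply le_of_forall_pos_le_add
    intro ε hε
    set m := min ((s - r) / 2) (r / 2) with hm
    set ε' := min ε (m - d) with hε'
    have hε'0 : 0 < ε' := lt_min hε (by linarith)
    have hε'm : d + ε' ≤ m := by
      have : ε' ≤ m - d := min_le_right _ _
      linarith
    have hεε : ε' ≤ ε := min_le_left _ _
    have h2 : infDist x (B ∪ sphere 0 s) < d + ε' := by linarith
    obtain ⟨y, hy, hxy⟩ :=
      (infDist_lt_iff (hsne.mono subset_union_right)).1 h2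
    have hm1 : m ≤ (s - r) / 2 := min_le_left _ _
    have hm2 : m ≤ r / 2 := min_le_right _ _
    rcases hy with hyB | hyS
    · -- y ∈ B
      rcases lt_or_ge ‖y‖ r with hyr | hyr
      · -- y ∈ B ∩ ball 0 r
        have : infDist x ((B ∩ ball 0 r) ∪ sphere 0 r) ≤ dist x y :=
          infDist_le_dist_of_mem (Or.inl ⟨hyB, mem_ball_zero_iff.2 hyr⟩)
        linarith
      · -- ‖y‖ ≥ r : x is near the sphere of radius r
        have hxy' : ‖y‖ - ‖x‖ ≤ dist x y := by
          rw [dist_comm, dist_eq_norm]; exact norm_sub_norm_le y x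
        have hxlow : r - (d + ε') < ‖x‖ := by linarith
        have hx0 : 0 < ‖x‖ := by linarith
        set z := (r / ‖x‖) • x with hz
        have hzs : z ∈ sphere (0 : E) r := by
          rw [mem_sphere_zero_iff_norm, hz, norm_smul, Real.norm_eq_abs,
            abs_of_pos (by positivity)]
          field_simp
        have hdz : dist x z = r - ‖x‖ := by
          rw [dist_eq_norm, hz, show x - (r / ‖x‖) • x = (1 - r / ‖x‖) • x by
            rw [sub_smul, one_smul], norm_smul, Real.norm_eq_abs]
          have h1r : 1 - r / ‖x‖ < 0 := by
            rw [sub_neg, lt_div_iff₀ hx0, one_mul]; exact hxb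
          rw [abs_of_neg h1r]
          field_simp
          ring
        have : infDist x ((B ∩ ball 0 r) ∪ sphere 0 r) ≤ dist x z :=
          infDist_le_dist_of_mem (Or.inr hzs)
        linarith
    · -- y ∈ sphere 0 s : impossible since dist x y is too small
      exfalso
      rw [mem_sphere_zero_iff_norm] at hyS
      have hxy' : ‖y‖ - ‖x‖ ≤ dist x y := by
        rw [dist_comm, dist_eq_norm]; exact norm_sub_norm_le y x
      have : s - r < dist x y := by linarith
      linarith
  · -- x ∈ sphere 0 r
    have h0 : infDist x ((B ∩ ball 0 r) ∪ sphere 0 r) ≤ dist x x :=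
      infDist_le_dist_of_mem (Or.inr hx)
    rw [dist_self] at h0
    linarith

/-- For `r ≤ s`, intersecting with `B_r` is continuous from
`(closed subsets of B_s, d_L^{(s)})` to `(subsets of B_r, d_L^{(r)})`: if
`d_L^{(s)}(X_i, X) → 0` then `d_L^{(r)}(X_i ∩ B_r, X ∩ B_r) → 0`. -/
theorem truncation_continuous {n : ℕ} (r s : ℝ) (hr : 0 < r) (hrs : r ≤ s)
    (Xi : ℕ → Set (EuclideanSpace ℝ (Fin n))) (X : Set (EuclideanSpace ℝ (Fin n)))
    (hXisub : ∀ i, Xi i ⊆ Metric.ball 0 s) (hXsub : X ⊆ Metric.ball 0 s)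
    (hXic : ∀ i, ∀ p ∈ closure (Xi i), p ∈ Metric.ball (0 : EuclideanSpace ℝ (Fin n)) s → p ∈ Xi i)
    (hXc : ∀ p ∈ closure X, p ∈ Metric.ball (0 : EuclideanSpace ℝ (Fin n)) s → p ∈ X)
    (hconv : Tendsto (fun i => localHausdorffDist s (Xi i) X) atTop (nhds 0)) :
    Tendsto (fun i => localHausdorffDist r
      (Xi i ∩ Metric.ball (0 : EuclideanSpace ℝ (Fin n)) r)
      (X ∩ Metric.ball (0 : EuclideanSpace ℝ (Fin n)) r)) atTop (nhds 0) := by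
  rcases eq_or_lt_of_le hrs with rfl | hlt
  · -- r = s : truncation does nothing
    have heq : (fun i => localHausdorffDist r
        (Xi i ∩ Metric.ball (0 : EuclideanSpace ℝ (Fin n)) r)
        (X ∩ Metric.ball (0 : EuclideanSpace ℝ (Fin n)) r)) =
        fun i => localHausdorffDist r (Xi i) X := by
      funext i
      rw [inter_eq_left.mpr (hXisub i), inter_eq_left.mpr hXsub]
    rw [heq]; exact hconv
  rcases n with _ | m
  · -- n = 0 : everything is trivial
    have hball : ∀ t : ℝ, 0 < t → Metric.ball (0 : EuclideanSpace ℝ (Fin 0)) t = univ := by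
      intro t ht
      ext x
      simp [Subsingleton.elim x 0, ht]
    have hsph : ∀ t : ℝ, t ≠ 0 → Metric.sphere (0 : EuclideanSpace ℝ (Fin 0)) t = ∅ :=
      fun t ht => sphere_eq_empty_of_subsingleton ht
    have heq : (fun i => localHausdorffDist r
        (Xi i ∩ Metric.ball (0 : EuclideanSpace ℝ (Fin 0)) r)
        (X ∩ Metric.ball (0 : EuclideanSpace ℝ (Fin 0)) r)) =
        fun i => localHausdorffDist s (Xi i) X := by
      funext i
      unfold localHausdorffDist
      simp [hball r hr, hsph r hr.ne', hsph s (by linarith : s ≠ 0)]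
    rw [heq]; exact hconv
  · -- n ≥ 1
    set m := min ((s - r) / 2) (r / 2) with hm
    have hm0 : 0 < m := lt_min (by linarith) (by linarith)
    have hev : ∀ᶠ i in atTop, localHausdorffDist s (Xi i) X < m :=
      hconv.eventually (Filter.Tendsto.eventually_lt_const hm0 tendsto_id) |>.mono (fun i hi => hi)
    refine squeeze_zero' (Eventually.of_forall fun i => hausdorffDist_nonneg) ?_ hconv
    refine hev.mono fun i hi => ?_
    unfold localHausdorffDist at *
    refine hausdorffDist_le_of_infDist hausdorffDist_nonneg ?_ ?_
    · exact trunc_infDist_le hr hlt (Xi i) X (hXisub i) hXsub hi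
    · intro x hx
      rw [hausdorffDist_comm]
      exact trunc_infDist_le hr hlt X (Xi i) hXsub (hXisub i) (by rwa [hausdorffDist_comm]) x hx
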